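/- Let Lf(n) = b(f(n+1)-f(n)) + a(f(n-1)-f(n)) on ℕ with a > b > 0 (f(-1):=f(0)). For h(n) = (a/b)^{n/2}, one has Lh(n) = -(√a-√b)²h(n) for all n ≥ 1 and Lh(0) ≥ -(√a-√b)²h(0); hence Lh(n+1) - Lh(n) ≤ -(√a-√b)²(h(n+1)-h(n)) for all n ∈ ℕ. -/

import Mathlib

/-- For the constant-rate birth-death generator
`L f (n) = b (f (n+1) - f n) + a (f (n-1) - f n)` on `ℕ` with `a > b > 0`
(reflecting convention `f(-1) := f 0`), the function `h(n) = (a/b)^{n/2}`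
satisfies `L h (n) = -(√a - √b)² h n` for `n ≥ 1`, `L h (0) ≥ -(√a - √b)² h 0`,
hence `L h (n+1) - L h (n) ≤ -(√a - √b)² (h (n+1) - h n)` for all `n`. -/
theorem stmt5 (a b : ℝ) (hb : 0 < b) (hab : b < a) :
    let h : ℕ → ℝ := fun n => Real.sqrt (a / b) ^ n
    let Lh : ℕ → ℝ := fun n => b * (h (n + 1) - h n) + a * (h (n - 1) - h n)
    let γ : ℝ := (Real.sqrt a - Real.sqrt b) ^ 2
    (∀ n : ℕ, 1 ≤ n → Lh n = -γ * h n) ∧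
    (Lh 0 ≥ -γ * h 0) ∧
    (∀ n : ℕ, Lh (n + 1) - Lh n ≤ -γ * (h (n + 1) - h n)) := by
  intro h Lh γ
  have ha : (0:ℝ) < a := hb.trans hab
  have hsb : (0:ℝ) < Real.sqrt b := Real.sqrt_pos.2 hb
  have hlt : Real.sqrt b < Real.sqrt a := Real.sqrt_lt_sqrt hb.le hab
  have hsq : Real.sqrt (a / b) = Real.sqrt a / Real.sqrt b := Real.sqrt_div ha.le b
  have hb2 : Real.sqrt b ^ 2 = b := Real.sq_sqrt hb.le
  have ha2 : Real.sqrt a ^ 2 = a := Real.sq_sqrt ha.le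
  set sa := Real.sqrt a
  set sb := Real.sqrt b
  have key : ∀ n : ℕ, 1 ≤ n → Lh n = -γ * h n := by
    intro n hn
    obtain ⟨m, rfl⟩ := Nat.exists_eq_add_of_le hn
    simp only [Lh, h, hsq, γ]
    have h1 : 1 + m + 1 - 1 = m + 1 := by omega
    have hm : 1 + m - 1 = m := by omega
    have h2 : 1 + m + 1 = m + 2 := by omega
    have h3 : 1 + m = m + 1 := by omega
    rw [hm, h2, h3, div_pow, div_pow, div_pow]
    rw [← hb2, ← ha2]
    rw [Real.sqrt_sq (hsb.trans hlt).le, Real.sqrt_sq hsb.le]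
    have hne : sb ≠ 0 := hsb.ne'
    field_simp
    ring
  refine ⟨key, ?_, ?_⟩
  · simp only [Lh, h, γ, hsq]
    have h0 : (0:ℕ) - 1 = 0 := rfl
    rw [h0]
    simp only [pow_one, pow_zero, sub_self, mul_zero, add_zero]
    have h1 : 0 ≤ b * (sa / sb - 1) := by
      apply mul_nonneg hb.le
      have : 1 < sa / sb := (one_lt_div hsb).2 hlt
      linarith
    nlinarith [sq_nonneg (sa - sb)]
  · intro n
    rcases Nat.eq_zero_or_pos n with rfl | hn
    · have h1 := key 1 le_rfl
      rw [h1]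
      have hgap : -γ * h 0 ≤ Lh 0 := by
        simpa using (show Lh 0 ≥ -γ * h 0 from by
          simp only [Lh, h, γ, hsq]
          have h0 : (0:ℕ) - 1 = 0 := rfl
          rw [h0]
          simp only [pow_one, pow_zero, sub_self, mul_zero, add_zero]
          have h1 : 0 ≤ b * (sa / sb - 1) := by
            apply mul_nonneg hb.le
            have : 1 < sa / sb := (one_lt_div hsb).2 hlt
            linarith
          nlinarith [sq_nonneg (sa - sb)])
      simp only [zero_add]
      linarith
    · rw [key (n+1) (by omega), key n hn]
      ring_nf
      exact le_refl _
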